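/- Let A be a 2-dimensional associative algebra over a field k that contains no multiplicative identity element. Then there exists a k-basis {e₁, e₂} of A such that the multiplication table is one of the following five: (1) e₁² = e₁, e₁e₂ = 0, e₂e₁ = e₂, e₂² = 0; (2) e₁² = e₁, e₁e₂ = e₂, e₂e₁ = 0, e₂² = 0; (3) e₁² = e₁, e₁e₂ = 0, e₂e₁ = 0, e₂² = 0; (4) e₁² = e₂, e₁e₂ = 0, e₂e₁ = 0, e₂² = 0; (5) e₁² = 0, e₁e₂ = 0, e₂e₁ = 0, e₂² = 0. -/

import Mathlib

set_option linter.unusedSectionVars false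

section Aux

variable {k A : Type*} [Field k] [NonUnitalRing A] [Module k A]
    [SMulCommClass k A A] [IsScalarTower k A A]

private lemma aux_basis (hdim : Module.finrank k A = 2) {u v : A}
    (h : LinearIndependent k ![u, v]) :
    ∃ C : Module.Basis (Fin 2) k A, C 0 = u ∧ C 1 = v := by
  have hc : Fintype.card (Fin 2) = Module.finrank k A := by simp [hdim]
  refine ⟨basisOfLinearIndependentOfCardEqFinrank h hc, ?_, ?_⟩ <;>
    simp [coe_basisOfLinearIndependentOfCardEqFinrank]

private lemma aux_repr (C : Module.Basis (Fin 2) k A) (a : A) :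
    a = C.repr a 0 • C 0 + C.repr a 1 • C 1 := by
  have := C.sum_repr a
  rw [Fin.sum_univ_two] at this
  exact this.symm

private lemma aux_unit (C : Module.Basis (Fin 2) k A) (e : A)
    (h1 : e * C 0 = C 0) (h2 : e * C 1 = C 1)
    (h3 : C 0 * e = C 0) (h4 : C 1 * e = C 1) :
    ∀ a : A, e * a = a ∧ a * e = a := by
  intro a
  have ha := aux_repr C a
  constructor
  · conv_lhs => rw [ha]
    rw [mul_add, mul_smul_comm, mul_smul_comm, h1, h2, ← ha]
  · conv_lhs => rw [ha]
    rw [add_mul, smul_mul_assoc, smul_mul_assoc, h3, h4, ← ha]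

private lemma aux_ind {u v : A} (hv : v ≠ 0)
    (h : ∀ s t : k, s • u + t • v = 0 → s = 0) :
    LinearIndependent k ![u, v] := by
  rw [LinearIndependent.pair_iff]
  intro s t hst
  have hs := h s t hst
  refine ⟨hs, ?_⟩
  rw [hs, zero_smul, zero_add, smul_eq_zero] at hst
  exact hst.resolve_right hv

end Aux

theorem stmt_1 (k A : Type*) [Field k] [NonUnitalRing A] [Module k A]
    [SMulCommClass k A A] [IsScalarTower k A A]
    (hdim : Module.finrank k A = 2)
    (hnounit : ¬ ∃ e : A, ∀ a : A, e * a = a ∧ a * e = a) :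
    ∃ C : Module.Basis (Fin 2) k A,
      (C 0 * C 0 = C 0 ∧ C 0 * C 1 = 0   ∧ C 1 * C 0 = C 1 ∧ C 1 * C 1 = 0) ∨
      (C 0 * C 0 = C 0 ∧ C 0 * C 1 = C 1 ∧ C 1 * C 0 = 0   ∧ C 1 * C 1 = 0) ∨
      (C 0 * C 0 = C 0 ∧ C 0 * C 1 = 0   ∧ C 1 * C 0 = 0   ∧ C 1 * C 1 = 0) ∨
      (C 0 * C 0 = C 1 ∧ C 0 * C 1 = 0   ∧ C 1 * C 0 = 0   ∧ C 1 * C 1 = 0) ∨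
      (C 0 * C 0 = 0   ∧ C 0 * C 1 = 0   ∧ C 1 * C 0 = 0   ∧ C 1 * C 1 = 0) := by
  classical
  have hfd : FiniteDimensional k A := FiniteDimensional.of_finrank_pos (by omega)
  by_cases hid : ∃ e : A, e ≠ 0 ∧ e * e = e
  · -- there is a nonzero idempotent e
    obtain ⟨e, he0, hee⟩ := hid
    obtain ⟨x, hx⟩ : ∃ x : A, x ∉ Submodule.span k {e} := by
      by_contra hcon
      push_neg at hcon
      have hsp : Submodule.span k {e} = ⊤ := eq_top_iff.2 fun y _ => hcon y
      have h1 : Module.finrank k (Submodule.span k {e}) = 1 :=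
        finrank_span_singleton he0
      rw [hsp, finrank_top, hdim] at h1
      omega
    -- Peirce components
    set p := e * x with hp
    set q := x * e with hq
    set r := e * (x * e) with hr
    have hep : e * p = p := by rw [hp, ← mul_assoc, hee]
    have her : e * r = r := by rw [hr, ← mul_assoc, hee]
    have heq : e * q = r := by rw [hq, hr]
    have hpe : p * e = r := by rw [hp, hr, mul_assoc]
    have hqe : q * e = q := by rw [hq, mul_assoc, hee]
    have hre : r * e = r := by rw [hr, mul_assoc, mul_assoc, hee]
    by_cases hu : p - r ≠ 0
    · -- table (2)
      set u := p - r with hud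
      have heu : e * u = u := by rw [hud, mul_sub, hep, her]
      have hue : u * e = 0 := by rw [hud, sub_mul, hpe, hre, sub_self]
      have hind : LinearIndependent k ![e, u] := by
        refine aux_ind hu fun s t hst => ?_
        have h2 := congrArg (· * e) hst
        simp only [add_mul, smul_mul_assoc, zero_mul, hee, hue, smul_zero, add_zero] at h2
        exact (smul_eq_zero.1 h2).resolve_right he0
      obtain ⟨C, hC0, hC1⟩ := aux_basis hdim hind
      refine ⟨C, Or.inr (Or.inl ⟨?_, ?_, ?_, ?_⟩)⟩
      · rw [hC0, hee]
      · rw [hC0, hC1, heu]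
      · rw [hC0, hC1, hue]
      · rw [hC1]
        calc u * u = u * (e * u) := by rw [heu]
          _ = (u * e) * u := by rw [mul_assoc]
          _ = 0 := by rw [hue, zero_mul]
    · push_neg at hu
      by_cases hv : q - r ≠ 0
      · -- table (1)
        set v := q - r with hvd
        have hev : e * v = 0 := by rw [hvd, mul_sub, heq, her, sub_self]
        have hve : v * e = v := by rw [hvd, sub_mul, hqe, hre]
        have hind : LinearIndependent k ![e, v] := by
          refine aux_ind hv fun s t hst => ?_
          have h2 := congrArg (e * ·) hst
          simp only [mul_add, mul_smul_comm, mul_zero, hee, hev, smul_zero, add_zero] at h2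
          exact (smul_eq_zero.1 h2).resolve_right he0
        obtain ⟨C, hC0, hC1⟩ := aux_basis hdim hind
        refine ⟨C, Or.inl ⟨?_, ?_, ?_, ?_⟩⟩
        · rw [hC0, hee]
        · rw [hC0, hC1, hev]
        · rw [hC0, hC1, hve]
        · rw [hC1]
          calc v * v = (v * e) * v := by rw [hve]
            _ = v * (e * v) := by rw [mul_assoc]
            _ = 0 := by rw [hev, mul_zero]
      · push_neg at hv
        by_cases hw : x - p - q + r ≠ 0
        · -- table (3) (or a unit contradiction)
          set w := x - p - q + r with hwd
          have hew : e * w = 0 := by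
            rw [hwd, mul_add, mul_sub, mul_sub, hep, heq, her, ← hp]
            abel
          have hwe : w * e = 0 := by
            rw [hwd, add_mul, sub_mul, sub_mul, hpe, hqe, hre, ← hq]
            abel
          have hind : LinearIndependent k ![e, w] := by
            refine aux_ind hw fun s t hst => ?_
            have h2 := congrArg (e * ·) hst
            simp only [mul_add, mul_smul_comm, mul_zero, hee, hew, smul_zero, add_zero] at h2
            exact (smul_eq_zero.1 h2).resolve_right he0
          obtain ⟨C, hC0, hC1⟩ := aux_basis hdim hind
          set c := C.repr (w * w) 0 with hcd
          set d := C.repr (w * w) 1 with hdd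
          have hww : w * w = c • e + d • w := by
            have := aux_repr C (w * w); rwa [hC0, hC1, ← hcd, ← hdd] at this
          have hc0 : c = 0 := by
            have h2 : e * (w * w) = 0 := by rw [← mul_assoc, hew, zero_mul]
            rw [hww, mul_add, mul_smul_comm, mul_smul_comm, hee, hew, smul_zero,
              add_zero] at h2
            exact (smul_eq_zero.1 h2).resolve_right he0
          rw [hc0, zero_smul, zero_add] at hww
          by_cases hd0 : d = 0
          · rw [hd0, zero_smul] at hww
            refine ⟨C, Or.inr (Or.inr (Or.inl ⟨?_, ?_, ?_, ?_⟩))⟩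
            · rw [hC0, hee]
            · rw [hC0, hC1, hew]
            · rw [hC0, hC1, hwe]
            · rw [hC1, hww]
          · -- d ≠ 0 gives an orthogonal idempotent, hence a unit: contradiction
            exfalso
            apply hnounit
            refine ⟨e + d⁻¹ • w, aux_unit C _ ?_ ?_ ?_ ?_⟩
            · rw [hC0, add_mul, hee, smul_mul_assoc, hwe, smul_zero, add_zero]
            · rw [hC1, add_mul, hew, smul_mul_assoc, hww, smul_smul,
                inv_mul_cancel₀ hd0, one_smul, zero_add]
            · rw [hC0, mul_add, hee, mul_smul_comm, hew, smul_zero, add_zero]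
            · rw [hC1, mul_add, hwe, mul_smul_comm, hww, smul_smul,
                inv_mul_cancel₀ hd0, one_smul, zero_add]
        · -- all Peirce parts vanish: e is a unit, contradiction
          exfalso
          push_neg at hw
          have hpr : p = r := by rwa [sub_eq_zero] at hu
          have hqr : q = r := by rwa [sub_eq_zero] at hv
          have hxr : x = r := by
            have : x - p - q + r = 0 := hw
            rw [hpr, hqr] at this
            have := sub_eq_zero.1 (by linear_combination (norm := abel) this : x - r = 0)
            exact this
          have hex : e * x = x := by rw [← hxr] at hpr; rw [← hp, hpr]
          have hxe : x * e = x := by rw [← hxr] at hqr; rw [← hq, hqr]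
          have hx0 : x ≠ 0 := fun h => hx (h ▸ Submodule.zero_mem _)
          have hind : LinearIndependent k ![e, x] := by
            refine aux_ind hx0 fun s t hst => ?_
            by_cases ht : t = 0
            · rw [ht, zero_smul, add_zero, smul_eq_zero] at hst
              exact hst.resolve_right he0
            · exfalso
              apply hx
              have h1 : t • x = -(s • e) := by
                rw [eq_neg_iff_add_eq_zero, add_comm]; exact hst
              have h2 : x = (-(t⁻¹ * s)) • e := by
                calc x = t⁻¹ • (t • x) := by
                      rw [smul_smul, inv_mul_cancel₀ ht, one_smul]
                  _ = t⁻¹ • (-(s • e)) := by rw [h1]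
                  _ = (-(t⁻¹ * s)) • e := by rw [smul_neg, smul_smul, neg_smul]
              exact h2 ▸ Submodule.smul_mem _ _ (Submodule.mem_span_singleton_self e)
          obtain ⟨C, hC0, hC1⟩ := aux_basis hdim hind
          exact hnounit ⟨e, aux_unit C e (by rw [hC0, hee]) (by rw [hC1, hex])
            (by rw [hC0, hee]) (by rw [hC1, hxe])⟩
  · -- no nonzero idempotent
    by_cases hsq : ∃ a : A, a * a ≠ 0
    · -- table (4)
      obtain ⟨a, ha2⟩ := hsq
      have ha0 : a ≠ 0 := fun h => ha2 (by rw [h, zero_mul])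
      set m2 := a * a with hm2
      have hcomm : m2 * a = a * m2 := by rw [hm2, mul_assoc]
      have hind : LinearIndependent k ![a, m2] := by
        refine aux_ind ha2 fun s t hst => ?_
        by_cases ht : t = 0
        · rw [ht, zero_smul, add_zero, smul_eq_zero] at hst
          exact hst.resolve_right ha0
        · exfalso
          have h1 : t • m2 = -(s • a) := by
            rw [eq_neg_iff_add_eq_zero, add_comm]; exact hst
          have h2 : m2 = (-(t⁻¹ * s)) • a := by
            calc m2 = t⁻¹ • (t • m2) := by rw [smul_smul, inv_mul_cancel₀ ht, one_smul]
              _ = t⁻¹ • (-(s • a)) := by rw [h1]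
              _ = (-(t⁻¹ * s)) • a := by rw [smul_neg, smul_smul, neg_smul]
          set lam := -(t⁻¹ * s) with hlamd
          have hlam : lam ≠ 0 := by
            intro h0
            rw [h0, zero_smul] at h2
            exact ha2 h2
          apply hid
          refine ⟨lam⁻¹ • a, smul_ne_zero (inv_ne_zero hlam) ha0, ?_⟩
          rw [smul_mul_assoc, mul_smul_comm, smul_smul, ← hm2, h2, smul_smul]
          congr 1
          field_simp
      obtain ⟨C, hC0, hC1⟩ := aux_basis hdim hind
      set c := C.repr (a * m2) 0 with hcd
      set d := C.repr (a * m2) 1 with hdd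
      have h3 : a * m2 = c • a + d • m2 := by
        have := aux_repr C (a * m2); rwa [hC0, hC1, ← hcd, ← hdd] at this
      have h4 : m2 * m2 = (d * c) • a + (c + d * d) • m2 := by
        calc m2 * m2 = a * (a * m2) := by rw [hm2, mul_assoc]
          _ = a * (c • a + d • m2) := by rw [h3]
          _ = c • m2 + d • (a * m2) := by
              rw [mul_add, mul_smul_comm, mul_smul_comm, ← hm2]
          _ = c • m2 + d • (c • a + d • m2) := by rw [h3]
          _ = (d * c) • a + (c + d * d) • m2 := by module
      have hc0 : c = 0 := by
        by_contra hc
        apply hid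
        have hne : m2 - d • a ≠ 0 := by
          intro h0
          have h5 : (-d) • a + (1 : k) • m2 = 0 := by
            rw [neg_smul, one_smul, add_comm, ← sub_eq_add_neg]
            exact h0
          exact one_ne_zero ((LinearIndependent.pair_iff.1 hind (-d) 1 h5).2)
        refine ⟨c⁻¹ • (m2 - d • a), smul_ne_zero (inv_ne_zero hc) hne, ?_⟩
        have key : (m2 - d • a) * (m2 - d • a) = c • (m2 - d • a) := by
          have expand : (m2 - d • a) * (m2 - d • a)
              = m2 * m2 - d • (m2 * a) - d • (a * m2) + (d * d) • (a * a) := by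
            simp only [mul_sub, sub_mul, smul_mul_assoc, mul_smul_comm, smul_smul]
            module
          rw [expand, hcomm, ← hm2, h3, h4]
          module
        rw [smul_mul_assoc, mul_smul_comm, smul_smul, key, smul_smul]
        congr 1
        field_simp
      rw [hc0, zero_smul, zero_add] at h3
      rw [hc0, mul_zero, zero_smul, zero_add, zero_add] at h4
      have hd0 : d = 0 := by
        by_contra hd
        apply hid
        refine ⟨(d⁻¹ * d⁻¹) • m2, smul_ne_zero (mul_ne_zero (inv_ne_zero hd) (inv_ne_zero hd)) ha2, ?_⟩
        rw [smul_mul_assoc, mul_smul_comm, smul_smul, h4, smul_smul]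
        congr 1
        field_simp
      rw [hd0, zero_smul] at h3
      rw [hd0, mul_zero, zero_smul] at h4
      refine ⟨C, Or.inr (Or.inr (Or.inr (Or.inl ⟨?_, ?_, ?_, ?_⟩)))⟩
      · rw [hC0, ← hm2, hC1]
      · rw [hC0, hC1, h3]
      · rw [hC0, hC1, hcomm, h3]
      · rw [hC1, h4]
    · -- table (5): all squares vanish forces zero multiplication
      push_neg at hsq
      have hz : ∀ a b : A, a * b = 0 := by
        intro a b
        by_contra hab
        have ha0 : a ≠ 0 := by rintro rfl; exact hab (zero_mul b)
        have habb : (a * b) * b = 0 := by rw [mul_assoc, hsq b, mul_zero]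
        have haab : a * (a * b) = 0 := by rw [← mul_assoc, hsq a, zero_mul]
        have hind : LinearIndependent k ![a, a * b] := by
          refine aux_ind hab fun s t hst => ?_
          have h2 := congrArg (· * b) hst
          simp only [add_mul, smul_mul_assoc, zero_mul, habb, smul_zero, add_zero] at h2
          exact (smul_eq_zero.1 h2).resolve_right hab
        obtain ⟨C, hC0, hC1⟩ := aux_basis hdim hind
        have hb := aux_repr C b
        rw [hC0, hC1] at hb
        apply hab
        calc a * b = a * (C.repr b 0 • a + C.repr b 1 • (a * b)) := by rw [← hb]
          _ = C.repr b 0 • (a * a) + C.repr b 1 • (a * (a * b)) := by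
              rw [mul_add, mul_smul_comm, mul_smul_comm]
          _ = 0 := by rw [hsq a, haab, smul_zero, smul_zero, add_zero]
      exact ⟨Module.finBasisOfFinrankEq k A hdim,
        Or.inr (Or.inr (Or.inr (Or.inr ⟨hz _ _, hz _ _, hz _ _, hz _ _⟩)))⟩
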